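/- Converse counting bound: fix finite nonempty alphabets 𝒴, 𝒳̂, a positive integer n, a type Q_Y of denominator n on 𝒴, and a joint type Q_{YX̂} of denominator n on 𝒴×𝒳̂ whose 𝒴-marginal is Q_Y. Let φ: T_n(Q_Y) → 𝒳̂^n be any map whose image has cardinality at most K. Then the set G* = { y^n ∈ T_n(Q_Y) : the joint empirical distribution of (y^n, φ(y^n)) equals Q_{YX̂} } satisfies |G*| ≤ min( |T_n(Q_Y)|, K·2^{n·H(Q_{Y|X̂}|Q_{X̂})} ), where H(Q_{Y|X̂}|Q_{X̂}) = H(Q_{YX̂}) − H(Q_{X̂}) is the conditional entropy. -/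
import Mathlib


open scoped BigOperators Classical
open Finset

noncomputable section

/-- `p` is a probability mass function on the finite alphabet `α`. -/
def IsPMF {α : Type*} [Fintype α] (p : α → ℝ) : Prop :=
  (∀ a, 0 ≤ p a) ∧ ∑ a, p a = 1

/-- `w` is a channel (a conditional pmf) from `α` to `β`. -/
def IsChannel {α β : Type*} [Fintype α] [Fintype β] (w : α → β → ℝ) : Prop :=
  ∀ a, IsPMF (w a)

/-- Kullback–Leibler divergence, base-2 logarithms, with the convention `0·log(0/q)=0`. -/
def klDiv {α : Type*} [Fintype α] (q p : α → ℝ) : ℝ :=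
  ∑ a, q a * Real.logb 2 (q a / p a)

/-- Shannon entropy, base-2 logarithms. -/
def entropy {α : Type*} [Fintype α] (q : α → ℝ) : ℝ :=
  -∑ a, q a * Real.logb 2 (q a)

/-- Mutual information of a joint pmf on `α × β`, base-2 logarithms. -/
def mutInfo {α β : Type*} [Fintype α] [Fintype β] (q : α × β → ℝ) : ℝ :=
  ∑ a, ∑ b, q (a, b) * Real.logb 2
    (q (a, b) / ((∑ b', q (a, b')) * (∑ a', q (a', b))))

/-- Conditional mutual information `I(X;Z|Y)` of a joint pmf on `X × Y × Z`,
base-2 logarithms. -/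
def condMutInfo {α β γ : Type*} [Fintype α] [Fintype β] [Fintype γ]
    (q : α × β × γ → ℝ) : ℝ :=
  ∑ x, ∑ y, ∑ z, q (x, y, z) * Real.logb 2
    ((q (x, y, z) * (∑ x', ∑ z', q (x', y, z'))) /
      ((∑ z', q (x, y, z')) * (∑ x', q (x', y, z))))

/-- Joint pmf `Q_{XYẐ} = Q_{XY}·Q_{Ẑ|XY}` built from `Q_{XY}` and a channel `W = Q_{Ẑ|XY}`. -/
def jointQ {α β γ : Type*} (Q : α × β → ℝ) (W : α × β → γ → ℝ) : α × β × γ → ℝ :=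
  fun p => Q (p.1, p.2.1) * W (p.1, p.2.1) p.2.2

/-- The `(Y, Ẑ)`-marginal of `jointQ Q W`. -/
def margYZ {α β γ : Type*} [Fintype α] (Q : α × β → ℝ) (W : α × β → γ → ℝ) :
    β × γ → ℝ :=
  fun p => ∑ x, Q (x, p.1) * W (x, p.1) p.2

/-- Expected distortion `E_Q[d(X, X̂)]` under the joint pmf `jointQ Q W`. -/
def expDist {α β γ : Type*} [Fintype α] [Fintype β] [Fintype γ]
    (Q : α × β → ℝ) (W : α × β → γ → ℝ) (d : α × γ → ℝ) : ℝ :=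
  ∑ x, ∑ y, ∑ z, Q (x, y) * W (x, y) z * d (x, z)

/-- `E(Q_{XY}, R, Δ)`: min over channels `Q_{X̂|XY}` with `E_Q[d(X,X̂)] ≤ Δ` of
`I_Q(X;X̂|Y) + |I_Q(Y;X̂) − R|⁺`. -/
def innerE {α β γ : Type*} [Fintype α] [Fintype β] [Fintype γ]
    (Q : α × β → ℝ) (d : α × γ → ℝ) (R Δ : ℝ) : ℝ :=
  sInf { e | ∃ W : α × β → γ → ℝ, IsChannel W ∧ expDist Q W d ≤ Δ ∧
    e = condMutInfo (jointQ Q W) + max (mutInfo (margYZ Q W) - R) 0 }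

/-- `E(R, Δ)`: min over pmfs `Q_{XY}` of `D(Q_{XY}‖P_{XY}) + E(Q_{XY},R,Δ)`. -/
def Eexp {α β γ : Type*} [Fintype α] [Fintype β] [Fintype γ]
    (P : α × β → ℝ) (d : α × γ → ℝ) (R Δ : ℝ) : ℝ :=
  sInf { e | ∃ Q : α × β → ℝ, IsPMF Q ∧ e = klDiv Q P + innerE Q d R Δ }

/-- `Δ_min`: min over functions `x̂ : 𝒴 → 𝒳̂` of `E[d(X, x̂(Y))]`. -/
def Dmin {α β γ : Type*} [Fintype α] [Fintype β] [Fintype γ]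
    (P : α × β → ℝ) (d : α × γ → ℝ) : ℝ :=
  sInf { e | ∃ φ : β → γ, e = ∑ x, ∑ y, P (x, y) * d (x, φ y) }

/-- The number of messages `⌊2^{nR}⌋` for a blocklength-`n` code of rate `R`. -/
def codeSize (R : ℝ) (n : ℕ) : ℕ := ⌊(2 : ℝ) ^ ((n : ℝ) * R)⌋₊

/-- The probability `P{d̄(X^n, g(f(Y^n))) ≤ Δ}` under the i.i.d. law `P_{XY}^n`. -/
def probSuccess {α β γ : Type*} [Fintype α] [Fintype β] [Fintype γ]
    (P : α × β → ℝ) (d : α × γ → ℝ) (Δ : ℝ) {n M : ℕ}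
    (f : (Fin n → β) → Fin M) (g : Fin M → Fin n → γ) : ℝ :=
  ∑ x : Fin n → α, ∑ y : Fin n → β,
    if (1 / (n : ℝ)) * ∑ i, d (x i, g (f y) i) ≤ Δ then ∏ i, P (x i, y i) else 0

/-- `p_c(n, R, Δ)`: the maximal correct-reconstruction probability over all
blocklength-`n` codes of rate `R`. -/
def pc {α β γ : Type*} [Fintype α] [Fintype β] [Fintype γ]
    (P : α × β → ℝ) (d : α × γ → ℝ) (R Δ : ℝ) (n : ℕ) : ℝ :=
  sSup { p | ∃ f : (Fin n → β) → Fin (codeSize R n),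
    ∃ g : Fin (codeSize R n) → Fin n → γ, p = probSuccess P d Δ f g }

/-- Conditional rate-distortion function `R_c(Q_{XY}, Δ)`. -/
def Rc {α β γ : Type*} [Fintype α] [Fintype β] [Fintype γ]
    (Q : α × β → ℝ) (d : α × γ → ℝ) (Δ : ℝ) : ℝ :=
  sInf { r | ∃ W : α × β → γ → ℝ, IsChannel W ∧ expDist Q W d ≤ Δ ∧
    r = condMutInfo (jointQ Q W) }

/-- Remote rate-distortion function `R_r(P_{XY}, Δ)`. -/
def Rr {α β γ : Type*} [Fintype α] [Fintype β] [Fintype γ]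
    (P : α × β → ℝ) (d : α × γ → ℝ) (Δ : ℝ) : ℝ :=
  sInf { r | ∃ W : β → γ → ℝ, IsChannel W ∧
    (∑ x, ∑ y, ∑ z, P (x, y) * W y z * d (x, z)) ≤ Δ ∧
    r = mutInfo (fun p : β × γ => (∑ x, P (x, p.1)) * W p.1 p.2) }

/-- Empirical distribution (type) of a sequence. -/
def empDist {α : Type*} {n : ℕ} (y : Fin n → α) : α → ℝ :=
  fun a => ((Finset.univ.filter fun i => y i = a).card : ℝ) / n

/-- Joint empirical distribution (joint type) of a pair of sequences. -/
def empDist2 {α β : Type*} {n : ℕ} (y : Fin n → α) (z : Fin n → β) : α × β → ℝ :=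
  fun p => ((Finset.univ.filter fun i => y i = p.1 ∧ z i = p.2).card : ℝ) / n

end

lemma fixed_z_bound (𝒴 𝒵 : Type) [Fintype 𝒴] [Fintype 𝒵] (n : ℕ) (hn : 0 < n)
    (Q : 𝒴 × 𝒵 → ℝ) (hQ0 : ∀ p, 0 ≤ Q p) (z : Fin n → 𝒵) :
    ((Finset.univ.filter fun y : Fin n → 𝒴 => empDist2 y z = Q).card : ℝ) ≤
      2 ^ ((n : ℝ) * (entropy Q - entropy (fun b => ∑ a, Q (a, b)))) := by
  classical
  set QZ : 𝒵 → ℝ := fun b => ∑ a, Q (a, b) with hQZdef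
  have hQZ0 : ∀ b, 0 ≤ QZ b := fun b => Finset.sum_nonneg fun a _ => hQ0 (a, b)
  set W : 𝒴 × 𝒵 → ℝ := fun p => Q p / QZ p.2 with hWdef
  have hW0 : ∀ p, 0 ≤ W p := fun p => div_nonneg (hQ0 p) (hQZ0 p.2)
  set c : ℝ := entropy Q - entropy QZ with hcdef
  set S := Finset.univ.filter fun y : Fin n → 𝒴 => empDist2 y z = Q with hSdef
  have hQZpos : ∀ p : 𝒴 × 𝒵, Q p ≠ 0 → 0 < QZ p.2 := by
    intro p hp
    have h1 : Q p ≤ QZ p.2 := by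
      simpa using Finset.single_le_sum (f := fun a => Q (a, p.2))
        (fun a _ => hQ0 (a, p.2)) (Finset.mem_univ p.1)
    exact lt_of_lt_of_le (lt_of_le_of_ne (hQ0 p) (Ne.symm hp)) h1
  have hsum_e : ∑ p : 𝒴 × 𝒵, Q p * Real.logb 2 (W p) = -c := by
    have hsplit : ∀ p : 𝒴 × 𝒵, Q p * Real.logb 2 (W p)
        = Q p * Real.logb 2 (Q p) - Q p * Real.logb 2 (QZ p.2) := by
      intro p
      by_cases hp : Q p = 0
      · simp [hp]
      · rw [hWdef]
        rw [Real.logb_div hp (ne_of_gt (hQZpos p hp))]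
        ring
    rw [Finset.sum_congr rfl fun p _ => hsplit p, Finset.sum_sub_distrib]
    have h2 : ∑ p : 𝒴 × 𝒵, Q p * Real.logb 2 (QZ p.2)
        = ∑ b, QZ b * Real.logb 2 (QZ b) := by
      rw [Fintype.sum_prod_type_right]
      refine Finset.sum_congr rfl fun b _ => ?_
      have hr : ∀ x : 𝒴, Q (x, b) * Real.logb 2 (QZ (x, b).2)
          = Q (x, b) * Real.logb 2 (QZ b) := fun x => rfl
      rw [Finset.sum_congr rfl fun x _ => hr x, ← Finset.sum_mul]
    rw [h2, hcdef]
    simp [entropy]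
    ring
  have hconst : ∀ y ∈ S, ∏ i, W (y i, z i) = 2 ^ (-((n : ℝ) * c)) := by
    intro y hy
    have hyS : empDist2 y z = Q := (Finset.mem_filter.mp hy).2
    have hcount : ∀ p : 𝒴 × 𝒵,
        (((Finset.univ.filter fun i => (y i, z i) = p).card : ℝ)) = n * Q p := by
      intro p
      have := congrFun hyS p
      rw [empDist2] at this
      have hfe : (Finset.univ.filter fun i => (y i, z i) = p)
          = (Finset.univ.filter fun i => y i = p.1 ∧ z i = p.2) := by
        apply Finset.filter_congr
        intro i _
        simp [Prod.ext_iff]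
      rw [hfe, ← this]
      field_simp
    have h1 : ∏ i, W (y i, z i)
        = ∏ p : 𝒴 × 𝒵, W p ^ ((Finset.univ.filter fun i => (y i, z i) = p).card) := by
      rw [← Finset.prod_fiberwise' Finset.univ (fun i => (y i, z i)) W]
      exact Finset.prod_congr rfl fun p _ => (Finset.prod_const _)
    rw [h1]
    have h2 : ∀ p : 𝒴 × 𝒵, W p ^ ((Finset.univ.filter fun i => (y i, z i) = p).card)
        = (2 : ℝ) ^ ((n : ℝ) * Q p * Real.logb 2 (W p)) := by
      intro p
      rw [← Real.rpow_natCast (W p), hcount p]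
      by_cases hp : Q p = 0
      · simp [hp, hWdef]
      · have hWpos : 0 < W p := div_pos (lt_of_le_of_ne (hQ0 p) (Ne.symm hp)) (hQZpos p hp)
        conv_lhs => rw [← Real.rpow_logb (b := 2) (by norm_num) (by norm_num) hWpos]
        rw [← Real.rpow_mul (by norm_num : (0:ℝ) ≤ 2)]
        ring_nf
    rw [Finset.prod_congr rfl fun p _ => h2 p,
      ← Real.rpow_sum_of_pos (by norm_num : (0:ℝ) < 2)]
    congr 1
    have hs : ∑ p : 𝒴 × 𝒵, (n : ℝ) * Q p * Real.logb 2 (W p)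
        = (n : ℝ) * ∑ p : 𝒴 × 𝒵, Q p * Real.logb 2 (W p) := by
      rw [Finset.mul_sum]; exact Finset.sum_congr rfl fun p _ => by ring
    rw [hs, hsum_e]
    ring
  have htot : ∑ y : Fin n → 𝒴, ∏ i, W (y i, z i) ≤ 1 := by
    rw [show (∑ y : Fin n → 𝒴, ∏ i, W (y i, z i))
        = ∏ i, ∑ a, W (a, z i) from (Fintype.prod_sum fun i a => W (a, z i)).symm]
    apply Finset.prod_le_one
    · intro i _
      exact Finset.sum_nonneg fun a _ => hW0 _
    · intro i _
      by_cases hb : QZ (z i) = 0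
      · have : ∀ a, W (a, z i) = Q (a, z i) / 0 := fun a => by rw [hWdef]; simp [hb]
        simp only [this]
        simp
      · have : ∑ a, W (a, z i) = 1 := by
          rw [hWdef]
          simp only
          rw [← Finset.sum_div]
          exact div_self hb
        rw [this]
  have hS1 : (S.card : ℝ) * 2 ^ (-((n : ℝ) * c)) ≤ 1 := by
    calc (S.card : ℝ) * 2 ^ (-((n : ℝ) * c))
        = ∑ y ∈ S, ∏ i, W (y i, z i) := by
          rw [Finset.sum_congr rfl hconst, Finset.sum_const, nsmul_eq_mul]
      _ ≤ ∑ y : Fin n → 𝒴, ∏ i, W (y i, z i) := by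
          apply Finset.sum_le_sum_of_subset_of_nonneg (Finset.subset_univ S)
          intro y _ _
          exact Finset.prod_nonneg fun i _ => hW0 _
      _ ≤ 1 := htot
  have hpos : (0 : ℝ) < 2 ^ ((n : ℝ) * c) := Real.rpow_pos_of_pos (by norm_num) _
  rw [Real.rpow_neg (by norm_num : (0:ℝ) ≤ 2)] at hS1
  calc (S.card : ℝ) = (S.card : ℝ) * ((2 ^ ((n:ℝ)*c))⁻¹ * 2 ^ ((n:ℝ)*c)) := by
        rw [inv_mul_cancel₀ (ne_of_gt hpos), mul_one]
    _ = ((S.card : ℝ) * (2 ^ ((n:ℝ)*c))⁻¹) * 2 ^ ((n:ℝ)*c) := by ring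
    _ ≤ 1 * 2 ^ ((n:ℝ)*c) := by
        apply mul_le_mul_of_nonneg_right hS1 (le_of_lt hpos)
    _ = 2 ^ ((n:ℝ)*c) := one_mul _


/-- **Converse counting bound** (eqs. (40)–(46) of the paper): for any map `φ` on the
type class `T_n(Q_Y)` whose image has at most `K` reconstruction sequences, the set of
`y^n ∈ T_n(Q_Y)` whose joint empirical distribution with `φ(y^n)` equals `Q_{YX̂}`
has size at most `min(|T_n(Q_Y)|, K·2^{nH(Q_{Y|X̂}|Q_{X̂})})`. -/

theorem converse_counting_bound
    (𝒴 𝒵 : Type) [Fintype 𝒴] [Fintype 𝒵] [Nonempty 𝒴] [Nonempty 𝒵]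
    (n : ℕ) (hn : 0 < n)
    (QY : 𝒴 → ℝ) (hQY : IsPMF QY) (hQYtype : ∀ a, ∃ k : ℕ, QY a = (k : ℝ) / n)
    (Q : 𝒴 × 𝒵 → ℝ) (hQ : IsPMF Q) (hQtype : ∀ p, ∃ k : ℕ, Q p = (k : ℝ) / n)
    (hmarg : ∀ a, ∑ b, Q (a, b) = QY a)
    (K : ℕ) (φ : (Fin n → 𝒴) → Fin n → 𝒵)
    (hK : ((Finset.univ.filter fun y : Fin n → 𝒴 => empDist y = QY).image φ).card ≤ K) :
    (((Finset.univ.filter fun y : Fin n → 𝒴 =>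
        empDist y = QY ∧ empDist2 y (φ y) = Q).card : ℝ)) ≤
      min (((Finset.univ.filter fun y : Fin n → 𝒴 => empDist y = QY).card : ℝ))
        ((K : ℝ) * 2 ^ ((n : ℝ) * (entropy Q - entropy (fun b => ∑ a, Q (a, b))))) := by
  classical
  set T := Finset.univ.filter fun y : Fin n → 𝒴 => empDist y = QY with hT
  set G := Finset.univ.filter fun y : Fin n → 𝒴 =>
    empDist y = QY ∧ empDist2 y (φ y) = Q with hG
  have hGT : G ⊆ T := by
    intro y hy
    rw [hG, Finset.mem_filter] at hy
    rw [hT, Finset.mem_filter]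
    exact ⟨hy.1, hy.2.1⟩
  refine le_min ?_ ?_
  · exact_mod_cast Finset.card_le_card hGT
  · set E : ℝ := 2 ^ ((n : ℝ) * (entropy Q - entropy (fun b => ∑ a, Q (a, b)))) with hE
    have hcard : G.card = ∑ z ∈ G.image φ, (G.filter fun y => φ y = z).card :=
      Finset.card_eq_sum_card_fiberwise fun y hy => Finset.mem_image_of_mem φ hy
    have hfiber : ∀ z ∈ G.image φ, ((G.filter fun y => φ y = z).card : ℝ) ≤ E := by
      intro z _
      refine le_trans ?_ (fixed_z_bound 𝒴 𝒵 n hn Q hQ.1 z)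
      have hsub : (G.filter fun y => φ y = z) ⊆
          Finset.univ.filter fun y : Fin n → 𝒴 => empDist2 y z = Q := by
        intro y hy
        rw [Finset.mem_filter] at hy
        obtain ⟨hyG, hφ⟩ := hy
        rw [hG, Finset.mem_filter] at hyG
        rw [Finset.mem_filter]
        exact ⟨Finset.mem_univ y, hφ ▸ hyG.2.2⟩
      exact_mod_cast Finset.card_le_card hsub
    have hpow0 : (0 : ℝ) ≤ E := le_of_lt (Real.rpow_pos_of_pos (by norm_num) _)
    calc (G.card : ℝ) = ∑ z ∈ G.image φ, ((G.filter fun y => φ y = z).card : ℝ) := by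
          rw [hcard]; push_cast; rfl
      _ ≤ ∑ _z ∈ G.image φ, E := Finset.sum_le_sum hfiber
      _ = ((G.image φ).card : ℝ) * E := by rw [Finset.sum_const, nsmul_eq_mul]
      _ ≤ (K : ℝ) * E := by
          refine mul_le_mul_of_nonneg_right ?_ hpow0
          have h1 := Finset.card_le_card (Finset.image_subset_image (f := φ) hGT)
          exact_mod_cast le_trans h1 hK
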